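/- For all x in (0, π], (1/180)·x^5 < x − 3·sin(x)/(2 + cos(x)). -/

import Mathlib

open Real

/-- Generic helper: if `f 0 = 0` and `f` has nonnegative derivative on `[0, ∞)`,
then `f x ≥ 0` for `x ≥ 0`. -/
lemma zhu_mono_aux {f f' : ℝ → ℝ} (hf : ∀ t, HasDerivAt f (f' t) t)
    (h0 : f 0 = 0) (hf' : ∀ t, 0 ≤ t → 0 ≤ f' t) {x : ℝ} (hx : 0 ≤ x) : 0 ≤ f x := by
  have hmono : MonotoneOn f (Set.Ici 0) := by
    apply monotoneOn_of_deriv_nonneg (convex_Ici 0)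
    · exact (continuous_iff_continuousAt.2 fun t => (hf t).continuousAt).continuousOn
    · exact fun t _ => (hf t).differentiableAt.differentiableWithinAt
    · intro t ht
      rw [interior_Ici] at ht
      rw [(hf t).deriv]
      exact hf' t ht.le
  have := hmono (Set.self_mem_Ici) (Set.mem_Ici.2 hx) hx
  rwa [h0] at this

lemma zhu_f1 {x : ℝ} (hx : 0 ≤ x) : 0 ≤ x - Real.sin x := by
  refine zhu_mono_aux (f := fun t => t - Real.sin t) (f' := fun t => 1 - Real.cos t) (fun t => ?_) (by simp) ?_ hx
  · exact (hasDerivAt_id t).sub (Real.hasDerivAt_sin t)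
  · intro t _; show (0:ℝ) ≤ 1 - Real.cos t; nlinarith [Real.cos_le_one t]

lemma zhu_f2 {x : ℝ} (hx : 0 ≤ x) : 0 ≤ Real.cos x - (1 - x ^ 2 / 2) := by
  refine zhu_mono_aux (f := fun t => Real.cos t - (1 - t ^ 2 / 2)) (f' := fun t => t - Real.sin t) (fun t => ?_) (by norm_num) ?_ hx
  · have h : HasDerivAt (fun t : ℝ => 1 - t ^ 2 / 2) (-t) t := by
      have := ((hasDerivAt_pow 2 t).div_const 2).const_sub 1
      exact this.congr_deriv (by norm_num)
    have := (Real.hasDerivAt_cos t).sub h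
    exact this.congr_deriv (by ring)
  · exact fun t ht => zhu_f1 ht

lemma zhu_f3 {x : ℝ} (hx : 0 ≤ x) : 0 ≤ Real.sin x - (x - x ^ 3 / 6) := by
  refine zhu_mono_aux (f := fun t => Real.sin t - (t - t ^ 3 / 6)) (f' := fun t => Real.cos t - (1 - t ^ 2 / 2)) (fun t => ?_) (by norm_num) ?_ hx
  · have h : HasDerivAt (fun t : ℝ => t - t ^ 3 / 6) (1 - t ^ 2 / 2) t := by
      have := (hasDerivAt_id t).sub ((hasDerivAt_pow 3 t).div_const 6)
      exact this.congr_deriv (by norm_num; ring)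
    have := (Real.hasDerivAt_sin t).sub h
    exact this
  · exact fun t ht => zhu_f2 ht

lemma zhu_f4 {x : ℝ} (hx : 0 ≤ x) : 0 ≤ (1 - x ^ 2 / 2 + x ^ 4 / 24) - Real.cos x := by
  refine zhu_mono_aux (f := fun t => (1 - t ^ 2 / 2 + t ^ 4 / 24) - Real.cos t) (f' := fun t => Real.sin t - (t - t ^ 3 / 6)) (fun t => ?_) (by norm_num) ?_ hx
  · have h : HasDerivAt (fun t : ℝ => 1 - t ^ 2 / 2 + t ^ 4 / 24) (-t + t ^ 3 / 6) t := by
      have := (((hasDerivAt_pow 2 t).div_const 2).const_sub 1).add ((hasDerivAt_pow 4 t).div_const 24)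
      exact this.congr_deriv (by norm_num; ring)
    have := h.sub (Real.hasDerivAt_cos t)
    exact this.congr_deriv (by ring)
  · exact fun t ht => zhu_f3 ht

lemma zhu_f5 {x : ℝ} (hx : 0 ≤ x) :
    0 ≤ (x - x ^ 3 / 6 + x ^ 5 / 120) - Real.sin x := by
  refine zhu_mono_aux (f := fun t => (t - t ^ 3 / 6 + t ^ 5 / 120) - Real.sin t)
    (f' := fun t => (1 - t ^ 2 / 2 + t ^ 4 / 24) - Real.cos t)
    (fun t => ?_) (by norm_num) ?_ hx
  · have h : HasDerivAt (fun t : ℝ => t - t ^ 3 / 6 + t ^ 5 / 120)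
        (1 - t ^ 2 / 2 + t ^ 4 / 24) t := by
      have := ((hasDerivAt_id t).sub ((hasDerivAt_pow 3 t).div_const 6)).add
        ((hasDerivAt_pow 5 t).div_const 120)
      exact this.congr_deriv (by norm_num; ring)
    have := h.sub (Real.hasDerivAt_sin t)
    exact this
  · exact fun t ht => zhu_f4 ht

lemma zhu_f6 {x : ℝ} (hx : 0 ≤ x) :
    0 ≤ Real.cos x - (1 - x ^ 2 / 2 + x ^ 4 / 24 - x ^ 6 / 720) := by
  refine zhu_mono_aux (f := fun t => Real.cos t - (1 - t ^ 2 / 2 + t ^ 4 / 24 - t ^ 6 / 720))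
    (f' := fun t => (t - t ^ 3 / 6 + t ^ 5 / 120) - Real.sin t)
    (fun t => ?_) (by norm_num) ?_ hx
  · have h : HasDerivAt (fun t : ℝ => 1 - t ^ 2 / 2 + t ^ 4 / 24 - t ^ 6 / 720)
        (-t + t ^ 3 / 6 - t ^ 5 / 120) t := by
      have := ((((hasDerivAt_pow 2 t).div_const 2).const_sub 1).add
        ((hasDerivAt_pow 4 t).div_const 24)).sub ((hasDerivAt_pow 6 t).div_const 720)
      exact this.congr_deriv (by norm_num; ring)
    have := (Real.hasDerivAt_cos t).sub h
    exact this.congr_deriv (by ring)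
  · exact fun t ht => zhu_f5 ht

lemma zhu_f7 {x : ℝ} (hx : 0 ≤ x) :
    0 ≤ Real.sin x - (x - x ^ 3 / 6 + x ^ 5 / 120 - x ^ 7 / 5040) := by
  refine zhu_mono_aux
    (f := fun t => Real.sin t - (t - t ^ 3 / 6 + t ^ 5 / 120 - t ^ 7 / 5040))
    (f' := fun t => Real.cos t - (1 - t ^ 2 / 2 + t ^ 4 / 24 - t ^ 6 / 720))
    (fun t => ?_) (by norm_num) ?_ hx
  · have h : HasDerivAt (fun t : ℝ => t - t ^ 3 / 6 + t ^ 5 / 120 - t ^ 7 / 5040)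
        (1 - t ^ 2 / 2 + t ^ 4 / 24 - t ^ 6 / 720) t := by
      have := (((hasDerivAt_id t).sub ((hasDerivAt_pow 3 t).div_const 6)).add
        ((hasDerivAt_pow 5 t).div_const 120)).sub ((hasDerivAt_pow 7 t).div_const 5040)
      exact this.congr_deriv (by norm_num; ring)
    have := (Real.hasDerivAt_sin t).sub h
    exact this
  · exact fun t ht => zhu_f6 ht

lemma zhu_f8 {x : ℝ} (hx : 0 ≤ x) :
    0 ≤ (1 - x ^ 2 / 2 + x ^ 4 / 24 - x ^ 6 / 720 + x ^ 8 / 40320) - Real.cos x := by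
  refine zhu_mono_aux
    (f := fun t => (1 - t ^ 2 / 2 + t ^ 4 / 24 - t ^ 6 / 720 + t ^ 8 / 40320) - Real.cos t)
    (f' := fun t => Real.sin t - (t - t ^ 3 / 6 + t ^ 5 / 120 - t ^ 7 / 5040))
    (fun t => ?_) (by norm_num) ?_ hx
  · have h : HasDerivAt
        (fun t : ℝ => 1 - t ^ 2 / 2 + t ^ 4 / 24 - t ^ 6 / 720 + t ^ 8 / 40320)
        (-t + t ^ 3 / 6 - t ^ 5 / 120 + t ^ 7 / 5040) t := by
      have := (((((hasDerivAt_pow 2 t).div_const 2).const_sub 1).add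
        ((hasDerivAt_pow 4 t).div_const 24)).sub ((hasDerivAt_pow 6 t).div_const 720)).add
        ((hasDerivAt_pow 8 t).div_const 40320)
      exact this.congr_deriv (by norm_num; ring)
    have := h.sub (Real.hasDerivAt_cos t)
    exact this.congr_deriv (by ring)
  · exact fun t ht => zhu_f7 ht

lemma zhu_f9 {x : ℝ} (hx : 0 ≤ x) :
    0 ≤ (x - x ^ 3 / 6 + x ^ 5 / 120 - x ^ 7 / 5040 + x ^ 9 / 362880) - Real.sin x := by
  refine zhu_mono_aux
    (f := fun t => (t - t ^ 3 / 6 + t ^ 5 / 120 - t ^ 7 / 5040 + t ^ 9 / 362880) - Real.sin t)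
    (f' := fun t => (1 - t ^ 2 / 2 + t ^ 4 / 24 - t ^ 6 / 720 + t ^ 8 / 40320) - Real.cos t)
    (fun t => ?_) (by norm_num) ?_ hx
  · have h : HasDerivAt
        (fun t : ℝ => t - t ^ 3 / 6 + t ^ 5 / 120 - t ^ 7 / 5040 + t ^ 9 / 362880)
        (1 - t ^ 2 / 2 + t ^ 4 / 24 - t ^ 6 / 720 + t ^ 8 / 40320) t := by
      have := ((((hasDerivAt_id t).sub ((hasDerivAt_pow 3 t).div_const 6)).add
        ((hasDerivAt_pow 5 t).div_const 120)).sub ((hasDerivAt_pow 7 t).div_const 5040)).add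
        ((hasDerivAt_pow 9 t).div_const 362880)
      exact this.congr_deriv (by norm_num; ring)
    have := h.sub (Real.hasDerivAt_sin t)
    exact this
  · exact fun t ht => zhu_f8 ht

lemma zhu_f10 {x : ℝ} (hx : 0 ≤ x) :
    0 ≤ Real.cos x -
      (1 - x ^ 2 / 2 + x ^ 4 / 24 - x ^ 6 / 720 + x ^ 8 / 40320 - x ^ 10 / 3628800) := by
  refine zhu_mono_aux
    (f := fun t => Real.cos t -
      (1 - t ^ 2 / 2 + t ^ 4 / 24 - t ^ 6 / 720 + t ^ 8 / 40320 - t ^ 10 / 3628800))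
    (f' := fun t =>
      (t - t ^ 3 / 6 + t ^ 5 / 120 - t ^ 7 / 5040 + t ^ 9 / 362880) - Real.sin t)
    (fun t => ?_) (by norm_num) ?_ hx
  · have h : HasDerivAt
        (fun t : ℝ =>
          1 - t ^ 2 / 2 + t ^ 4 / 24 - t ^ 6 / 720 + t ^ 8 / 40320 - t ^ 10 / 3628800)
        (-t + t ^ 3 / 6 - t ^ 5 / 120 + t ^ 7 / 5040 - t ^ 9 / 362880) t := by
      have := ((((((hasDerivAt_pow 2 t).div_const 2).const_sub 1).add
        ((hasDerivAt_pow 4 t).div_const 24)).sub ((hasDerivAt_pow 6 t).div_const 720)).add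
        ((hasDerivAt_pow 8 t).div_const 40320)).sub ((hasDerivAt_pow 10 t).div_const 3628800)
      exact this.congr_deriv (by norm_num; ring)
    have := (Real.hasDerivAt_cos t).sub h
    exact this.congr_deriv (by ring)
  · exact fun t ht => zhu_f9 ht

theorem zhu_lower_bound (x : ℝ) (hx : x ∈ Set.Ioc 0 π) :
    (1 / 180) * x ^ 5 < x - 3 * sin x / (2 + cos x) := by
  obtain ⟨hx0, hxpi⟩ := hx
  have hc : (0 : ℝ) < 2 + cos x := by nlinarith [Real.neg_one_le_cos x]
  have hx315 : x ≤ 3.15 := hxpi.trans Real.pi_lt_d2.le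
  have hS := zhu_f9 hx0.le
  have hCl := zhu_f10 hx0.le
  have hCu := zhu_f8 hx0.le
  -- polynomial positivity
  have hP : 0 < 14400 - 1560 * x ^ 2 + 54 * x ^ 4 - x ^ 6 := by
    have ht : x ^ 2 ≤ 9.9225 := by nlinarith
    nlinarith [sq_nonneg (x ^ 2 - 17.7), mul_nonneg (sq_nonneg (x ^ 2)) (sub_nonneg.2 ht)]
  have key : 3 * sin x < (x - 1 / 180 * x ^ 5) * (2 + cos x) := by
    nlinarith [mul_nonneg hx0.le hCl, mul_nonneg (pow_nonneg hx0.le 5) hCu,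
      mul_pos (pow_pos hx0 7) hP, hS]
  have := (div_lt_iff₀ hc).2 key
  linarith
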